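/- Fix L ≥ 2 and d ≥ 1. There exists a constant C > 0 (depending only on d and L) such that for every R ≥ 1 and all x, x', z, z' ∈ ℝ^d with ‖(x,1)‖ ≤ R, ‖(x',1)‖ ≤ R, ‖(z,1)‖ ≤ R, ‖(z',1)‖ ≤ R, one has |K^NT(x,x') − K^NT(z,z')| ≤ C R² ‖(x,x') − (z,z')‖^{2^{−L}}, where ‖(x,x') − (z,z')‖ is the Euclidean norm on ℝ^{2d}. In particular, K^NT is Hölder continuous with exponent 2^{−L} on bounded sets. -/

import Mathlib

open MeasureTheory Filter Topology

noncomputable section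

/-- First arc-cosine kernel `κ₀`. -/
def kappa0 (u : ℝ) : ℝ := (Real.pi - Real.arccos u) / Real.pi

/-- Second arc-cosine kernel `κ₁`. -/
def kappa1 (u : ℝ) : ℝ := (Real.sqrt (1 - u ^ 2) + u * (Real.pi - Real.arccos u)) / Real.pi

/-- `ū = ⟨x̃, x̃′⟩ / (‖x̃‖‖x̃′‖)` where `x̃ = (x, 1) ∈ ℝ^{d+1}`. -/
def ntkBar {d : ℕ} (x y : EuclideanSpace ℝ (Fin d)) : ℝ :=
  (inner ℝ x y + 1) / (Real.sqrt (‖x‖ ^ 2 + 1) * Real.sqrt (‖y‖ ^ 2 + 1))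

/-- The neural tangent kernel of a fully-connected ReLU network with `L` hidden layers:
`K^NT(x, y) = ‖x̃‖‖ỹ‖ Σ_{r=0}^{L} κ₁^{(r)}(ū) Π_{s=r}^{L-1} κ₀(κ₁^{(s)}(ū)) + 1`. -/
def NTK (L : ℕ) {d : ℕ} (x y : EuclideanSpace ℝ (Fin d)) : ℝ :=
  Real.sqrt (‖x‖ ^ 2 + 1) * Real.sqrt (‖y‖ ^ 2 + 1) *
      ∑ r ∈ Finset.range (L + 1),
        kappa1^[r] (ntkBar x y) * ∏ s ∈ Finset.Ico r L, kappa0 (kappa1^[s] (ntkBar x y))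
    + 1



lemma arccos_sub_le {a b : ℝ} (ha : -1 ≤ a) (ha' : a ≤ 1) (hb' : b ≤ 1) (hab : a ≤ b) :
    Real.arccos a - Real.arccos b ≤ Real.pi * Real.sqrt (b - a) := by
  have hπ := Real.pi_pos
  have hb : -1 ≤ b := le_trans ha hab
  have hφθ : Real.arccos b ≤ Real.arccos a := by
    rcases eq_or_lt_of_le hab with rfl | h
    · exact le_rfl
    · exact (Real.strictAntiOn_arccos ⟨ha, ha'⟩ ⟨hb, hb'⟩ h).le
  set θ := Real.arccos a with hθdef
  set φ := Real.arccos b with hφdef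
  have hθπ : θ ≤ Real.pi := Real.arccos_le_pi a
  have hφ0 : 0 ≤ φ := Real.arccos_nonneg b
  have ht0 : 0 ≤ θ - φ := sub_nonneg.2 hφθ
  have htπ : θ - φ ≤ Real.pi := by
    have := Real.arccos_nonneg a
    linarith
  have hkey : b - a = 2 * Real.sin ((φ + θ)/2) * Real.sin ((θ - φ)/2) := by
    have h1 := Real.cos_sub_cos φ θ
    rw [hφdef, hθdef, Real.cos_arccos hb hb', Real.cos_arccos ha ha'] at h1
    have h2 : (φ - θ)/2 = -((θ - φ)/2) := by ring
    rw [h2, Real.sin_neg] at h1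
    linarith
  have hm1 : (θ - φ)/2 ≤ (φ + θ)/2 := by linarith
  have hm2 : (φ + θ)/2 ≤ Real.pi - (θ - φ)/2 := by linarith
  have hs : Real.sin ((θ - φ)/2) ≤ Real.sin ((φ + θ)/2) := by
    rcases le_or_gt ((φ + θ)/2) (Real.pi/2) with h | h
    · exact Real.sin_le_sin_of_le_of_le_pi_div_two (by linarith) h hm1
    · rw [← Real.sin_pi_sub ((φ + θ)/2)]
      exact Real.sin_le_sin_of_le_of_le_pi_div_two (by linarith) (by linarith) (by linarith)
  have hj : (θ - φ)/Real.pi ≤ Real.sin ((θ - φ)/2) := by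
    have h := Real.mul_le_sin (x := (θ - φ)/2) (by linarith) (by linarith)
    calc (θ - φ)/Real.pi = 2/Real.pi * ((θ - φ)/2) := by ring
    _ ≤ _ := h
  have hj0 : 0 ≤ (θ - φ)/Real.pi := by positivity
  have hja : θ - φ ≤ Real.sin ((θ - φ)/2) * Real.pi := (div_le_iff₀ hπ).mp hj
  have h0 : 0 ≤ Real.sin ((θ - φ)/2) := le_trans hj0 hj
  have e1 : (θ - φ)^2 ≤ (Real.sin ((θ - φ)/2) * Real.pi)^2 := by nlinarith [hja, ht0]
  have h4 : Real.sin ((θ-φ)/2) * Real.sin ((θ-φ)/2)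
      ≤ 2 * Real.sin ((φ+θ)/2) * Real.sin ((θ-φ)/2) := by
    nlinarith [mul_le_mul_of_nonneg_left hs h0, mul_nonneg h0 (h0.trans hs)]
  have h5 : Real.pi^2 * (Real.sin ((θ-φ)/2) * Real.sin ((θ-φ)/2))
      ≤ Real.pi^2 * (2 * Real.sin ((φ+θ)/2) * Real.sin ((θ-φ)/2)) :=
    mul_le_mul_of_nonneg_left h4 (sq_nonneg _)
  have hsq : (θ - φ)^2 ≤ Real.pi^2 * (b - a) := by nlinarith [e1, h5, hkey]
  calc θ - φ ≤ Real.sqrt (Real.pi^2 * (b - a)) := by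
        rw [Real.le_sqrt ht0 (by nlinarith [hsq, sq_nonneg (θ - φ)])]
        exact hsq
  _ = Real.pi * Real.sqrt (b - a) := by
        rw [Real.sqrt_mul (by positivity), Real.sqrt_sq hπ.le]

lemma abs_arccos_sub_arccos {a b : ℝ} (ha : -1 ≤ a) (ha' : a ≤ 1) (hb : -1 ≤ b) (hb' : b ≤ 1) :
    |Real.arccos a - Real.arccos b| ≤ Real.pi * Real.sqrt |a - b| := by
  rcases le_total a b with h | h
  · have h1 : Real.arccos b ≤ Real.arccos a := by
      rcases eq_or_lt_of_le h with rfl | h'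
      · exact le_rfl
      · exact (Real.strictAntiOn_arccos ⟨ha, ha'⟩ ⟨hb, hb'⟩ h').le
    rw [abs_of_nonneg (sub_nonneg.2 h1), abs_of_nonpos (sub_nonpos.2 h), neg_sub]
    exact arccos_sub_le ha ha' hb' h
  · have h1 : Real.arccos a ≤ Real.arccos b := by
      rcases eq_or_lt_of_le h with rfl | h'
      · exact le_rfl
      · exact (Real.strictAntiOn_arccos ⟨hb, hb'⟩ ⟨ha, ha'⟩ h').le
    rw [abs_of_nonpos (sub_nonpos.2 h1), abs_of_nonneg (sub_nonneg.2 h), neg_sub]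
    exact arccos_sub_le hb hb' ha' h





lemma kappa0_nonneg (u : ℝ) : 0 ≤ kappa0 u :=
  div_nonneg (sub_nonneg.2 (Real.arccos_le_pi u)) Real.pi_pos.le

lemma kappa0_le_one (u : ℝ) : kappa0 u ≤ 1 :=
  (div_le_one Real.pi_pos).2 (by linarith [Real.arccos_nonneg u])

lemma kappa0_holder {a b : ℝ} (ha : -1 ≤ a) (ha' : a ≤ 1) (hb : -1 ≤ b) (hb' : b ≤ 1) :
    |kappa0 a - kappa0 b| ≤ Real.sqrt |a - b| := by
  have hπ := Real.pi_pos
  have h : kappa0 a - kappa0 b = (Real.arccos b - Real.arccos a) / Real.pi := by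
    unfold kappa0; field_simp; ring
  rw [h, abs_div, abs_of_pos hπ, div_le_iff₀ hπ, abs_sub_comm]
  calc |Real.arccos a - Real.arccos b| ≤ Real.pi * Real.sqrt |a - b| :=
        abs_arccos_sub_arccos ha ha' hb hb'
  _ = Real.sqrt |a - b| * Real.pi := mul_comm _ _

-- the auxiliary function F θ = sin θ + (π - θ) cos θ
lemma hasDerivAt_F (θ : ℝ) :
    HasDerivAt (fun t : ℝ => Real.sin t + (Real.pi - t) * Real.cos t)
      (-((Real.pi - θ) * Real.sin θ)) θ := by
  have h1 := Real.hasDerivAt_sin θ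
  have h2 := Real.hasDerivAt_cos θ
  have h3 : HasDerivAt (fun t : ℝ => Real.pi - t) (-1) θ := by
    simpa using (hasDerivAt_id θ).const_sub Real.pi
  have h4 := h3.mul h2
  have h5 := h1.add h4
  exact h5.congr_deriv (by ring)

lemma antitoneOn_F : AntitoneOn (fun t : ℝ => Real.sin t + (Real.pi - t) * Real.cos t)
    (Set.Icc 0 Real.pi) := by
  apply antitoneOn_of_deriv_nonpos (convex_Icc 0 Real.pi)
  · exact ((Real.continuous_sin).add ((continuous_const.sub continuous_id).mul
      Real.continuous_cos)).continuousOn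
  · intro x hx
    exact ((hasDerivAt_F x).differentiableAt).differentiableWithinAt
  · intro x hx
    rw [interior_Icc] at hx
    rw [(hasDerivAt_F x).deriv]
    have := Real.sin_nonneg_of_nonneg_of_le_pi hx.1.le hx.2.le
    nlinarith [hx.1, hx.2]

lemma antitoneOn_G : AntitoneOn
    (fun t : ℝ => Real.pi * Real.cos t - (Real.sin t + (Real.pi - t) * Real.cos t))
    (Set.Icc 0 Real.pi) := by
  apply antitoneOn_of_deriv_nonpos (convex_Icc 0 Real.pi)
  · exact ((continuous_const.mul Real.continuous_cos).sub ((Real.continuous_sin).add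
      ((continuous_const.sub continuous_id).mul Real.continuous_cos))).continuousOn
  · intro x hx
    exact (((Real.hasDerivAt_cos x).const_mul Real.pi).sub (hasDerivAt_F x)).differentiableAt.differentiableWithinAt
  · intro x hx
    rw [interior_Icc] at hx
    rw [(show HasDerivAt (fun t : ℝ => Real.pi * Real.cos t - (Real.sin t + (Real.pi - t) * Real.cos t)) _ x from ((Real.hasDerivAt_cos x).const_mul Real.pi).sub (hasDerivAt_F x)).deriv]
    have := Real.sin_nonneg_of_nonneg_of_le_pi hx.1.le hx.2.le
    nlinarith [hx.1, hx.2]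

lemma kappa1_eq (u : ℝ) (h1 : -1 ≤ u) (h2 : u ≤ 1) :
    kappa1 u = (Real.sin (Real.arccos u)
      + (Real.pi - Real.arccos u) * Real.cos (Real.arccos u)) / Real.pi := by
  rw [Real.sin_arccos, Real.cos_arccos h1 h2]
  unfold kappa1
  ring

lemma kappa1_mono_lip {a b : ℝ} (ha : -1 ≤ a) (hb' : b ≤ 1) (hab : a ≤ b) :
    kappa1 a ≤ kappa1 b ∧ kappa1 b - kappa1 a ≤ b - a := by
  have hπ := Real.pi_pos
  have ha' : a ≤ 1 := hab.trans hb'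
  have hb : -1 ≤ b := ha.trans hab
  have hφθ : Real.arccos b ≤ Real.arccos a := by
    rcases eq_or_lt_of_le hab with rfl | h
    · exact le_rfl
    · exact (Real.strictAntiOn_arccos ⟨ha, ha'⟩ ⟨hb, hb'⟩ h).le
  have hmemb : Real.arccos b ∈ Set.Icc 0 Real.pi := ⟨Real.arccos_nonneg b, Real.arccos_le_pi b⟩
  have hmema : Real.arccos a ∈ Set.Icc 0 Real.pi := ⟨Real.arccos_nonneg a, Real.arccos_le_pi a⟩
  have hF := antitoneOn_F hmemb hmema hφθ
  have hG := antitoneOn_G hmemb hmema hφθ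
  simp only [Real.cos_arccos ha ha', Real.cos_arccos hb hb'] at hF hG
  have hka : kappa1 a = (Real.sin (Real.arccos a) + (Real.pi - Real.arccos a) * a)/Real.pi := by
    rw [kappa1_eq a ha ha', Real.cos_arccos ha ha']
  have hkb : kappa1 b = (Real.sin (Real.arccos b) + (Real.pi - Real.arccos b) * b)/Real.pi := by
    rw [kappa1_eq b hb hb', Real.cos_arccos hb hb']
  constructor
  · rw [hka, hkb]
    gcongr
  · rw [hka, hkb, div_sub_div_same, div_le_iff₀ hπ]
    nlinarith [hG]

lemma kappa1_neg_one : kappa1 (-1) = 0 := by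
  unfold kappa1
  rw [Real.arccos_neg_one]
  norm_num

lemma kappa1_one : kappa1 1 = 1 := by
  unfold kappa1
  rw [Real.arccos_one]
  norm_num

lemma kappa1_mem {u : ℝ} (h1 : -1 ≤ u) (h2 : u ≤ 1) : 0 ≤ kappa1 u ∧ kappa1 u ≤ 1 := by
  constructor
  · rw [← kappa1_neg_one]
    exact (kappa1_mono_lip le_rfl h2 h1).1
  · rw [← kappa1_one]
    exact (kappa1_mono_lip h1 le_rfl h2).1

lemma kappa1_abs_lip {a b : ℝ} (ha : -1 ≤ a) (ha' : a ≤ 1) (hb : -1 ≤ b) (hb' : b ≤ 1) :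
    |kappa1 a - kappa1 b| ≤ |a - b| := by
  rcases le_total a b with h | h
  · have := kappa1_mono_lip ha hb' h
    rw [abs_of_nonpos (by linarith [this.1]), abs_of_nonpos (by linarith)]
    linarith [this.2]
  · have := kappa1_mono_lip hb ha' h
    rw [abs_of_nonneg (by linarith [this.1]), abs_of_nonneg (by linarith)]
    linarith [this.2]

lemma kappa1_iter_mem (r : ℕ) {u : ℝ} (h1 : -1 ≤ u) (h2 : u ≤ 1) :
    -1 ≤ kappa1^[r] u ∧ kappa1^[r] u ≤ 1 := by
  induction r with
  | zero => exact ⟨h1, h2⟩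
  | succ n ih =>
    rw [Function.iterate_succ_apply']
    have := kappa1_mem ih.1 ih.2
    exact ⟨by linarith [this.1], this.2⟩

lemma kappa1_iter_lip (r : ℕ) {a b : ℝ} (ha : -1 ≤ a) (ha' : a ≤ 1) (hb : -1 ≤ b) (hb' : b ≤ 1) :
    |kappa1^[r] a - kappa1^[r] b| ≤ |a - b| := by
  induction r with
  | zero => simp
  | succ n ih =>
    rw [Function.iterate_succ_apply', Function.iterate_succ_apply']
    have hma := kappa1_iter_mem n ha ha'
    have hmb := kappa1_iter_mem n hb hb'
    exact (kappa1_abs_lip hma.1 hma.2 hmb.1 hmb.2).trans ih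




lemma abs_prod_sub_prod {ι : Type*} (s : Finset ι) (f g : ι → ℝ)
    (hf : ∀ i ∈ s, |f i| ≤ 1) (hg : ∀ i ∈ s, |g i| ≤ 1) :
    |(∏ i ∈ s, f i) - ∏ i ∈ s, g i| ≤ ∑ i ∈ s, |f i - g i| := by
  induction s using Finset.cons_induction with
  | empty => simp
  | cons a s ha ih =>
    rw [Finset.prod_cons, Finset.prod_cons, Finset.sum_cons]
    have hfs : ∀ i ∈ s, |f i| ≤ 1 := fun i hi => hf i (Finset.mem_cons.2 (Or.inr hi))
    have hgs : ∀ i ∈ s, |g i| ≤ 1 := fun i hi => hg i (Finset.mem_cons.2 (Or.inr hi))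
    have hPf : |∏ i ∈ s, f i| ≤ 1 := by
      rw [Finset.abs_prod]
      exact Finset.prod_le_one (fun i _ => abs_nonneg _) (fun i hi => hfs i hi)
    have hga : |g a| ≤ 1 := hg a (Finset.mem_cons_self a s)
    have key : f a * ∏ i ∈ s, f i - g a * ∏ i ∈ s, g i
        = (f a - g a) * ∏ i ∈ s, f i + g a * ((∏ i ∈ s, f i) - ∏ i ∈ s, g i) := by ring
    rw [key]
    calc |(f a - g a) * ∏ i ∈ s, f i + g a * ((∏ i ∈ s, f i) - ∏ i ∈ s, g i)|
        ≤ |(f a - g a) * ∏ i ∈ s, f i| + |g a * ((∏ i ∈ s, f i) - ∏ i ∈ s, g i)| := abs_add_le _ _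
      _ = |f a - g a| * |∏ i ∈ s, f i| + |g a| * |(∏ i ∈ s, f i) - ∏ i ∈ s, g i| := by
          rw [abs_mul, abs_mul]
      _ ≤ |f a - g a| * 1 + 1 * |(∏ i ∈ s, f i) - ∏ i ∈ s, g i| :=
          add_le_add (mul_le_mul_of_nonneg_left hPf (abs_nonneg _))
            (mul_le_mul_of_nonneg_right hga (abs_nonneg _))
      _ ≤ |f a - g a| + ∑ i ∈ s, |f i - g i| := by
          rw [mul_one, one_mul]
          exact add_le_add_right (ih hfs hgs) _

lemma sum_holder (L : ℕ) {u v : ℝ} (hu : -1 ≤ u) (hu' : u ≤ 1) (hv : -1 ≤ v) (hv' : v ≤ 1) :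
    |(∑ r ∈ Finset.range (L+1), kappa1^[r] u * ∏ s ∈ Finset.Ico r L, kappa0 (kappa1^[s] u))
     - ∑ r ∈ Finset.range (L+1), kappa1^[r] v * ∏ s ∈ Finset.Ico r L, kappa0 (kappa1^[s] v)|
      ≤ ((L:ℝ)+1) * ((L:ℝ)+2) * Real.sqrt |u - v| := by
  have habs2 : |u - v| ≤ 2 := by
    rw [abs_le]; constructor <;> linarith
  have hss : Real.sqrt |u-v| * Real.sqrt |u-v| = |u-v| := Real.mul_self_sqrt (abs_nonneg _)
  have hs2 : Real.sqrt |u-v| ≤ 2 := (Real.sqrt_le_left (by norm_num)).2 (by nlinarith)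
  have hsq : |u-v| ≤ 2 * Real.sqrt |u-v| := by nlinarith [Real.sqrt_nonneg |u-v|]
  rw [← Finset.sum_sub_distrib]
  calc |∑ r ∈ Finset.range (L+1), (kappa1^[r] u * ∏ s ∈ Finset.Ico r L, kappa0 (kappa1^[s] u)
          - kappa1^[r] v * ∏ s ∈ Finset.Ico r L, kappa0 (kappa1^[s] v))|
      ≤ ∑ r ∈ Finset.range (L+1), |kappa1^[r] u * ∏ s ∈ Finset.Ico r L, kappa0 (kappa1^[s] u)
          - kappa1^[r] v * ∏ s ∈ Finset.Ico r L, kappa0 (kappa1^[s] v)| :=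
        Finset.abs_sum_le_sum_abs _ _
    _ ≤ ∑ _r ∈ Finset.range (L+1), (((L:ℝ)+2) * Real.sqrt |u - v|) := by
        apply Finset.sum_le_sum
        intro r _
        have hau := kappa1_iter_mem r hu hu'
        have hav := kappa1_iter_mem r hv hv'
        have h1 : |kappa1^[r] u - kappa1^[r] v| ≤ |u - v| := kappa1_iter_lip r hu hu' hv hv'
        have hP1 : |∏ s ∈ Finset.Ico r L, kappa0 (kappa1^[s] u)| ≤ 1 := by
          rw [Finset.abs_prod]
          exact Finset.prod_le_one (fun i _ => abs_nonneg _)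
            (fun i _ => abs_le.2 ⟨by linarith [kappa0_nonneg (kappa1^[i] u)], kappa0_le_one _⟩)
        have hbv : |kappa1^[r] v| ≤ 1 := abs_le.2 ⟨hav.1, hav.2⟩
        have hPQ : |(∏ s ∈ Finset.Ico r L, kappa0 (kappa1^[s] u))
            - ∏ s ∈ Finset.Ico r L, kappa0 (kappa1^[s] v)| ≤ (L:ℝ) * Real.sqrt |u - v| := by
          calc |(∏ s ∈ Finset.Ico r L, kappa0 (kappa1^[s] u))
              - ∏ s ∈ Finset.Ico r L, kappa0 (kappa1^[s] v)|
              ≤ ∑ s ∈ Finset.Ico r L, |kappa0 (kappa1^[s] u) - kappa0 (kappa1^[s] v)| := by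
                apply abs_prod_sub_prod
                · exact fun i _ => abs_le.2 ⟨by linarith [kappa0_nonneg (kappa1^[i] u)],
                    kappa0_le_one _⟩
                · exact fun i _ => abs_le.2 ⟨by linarith [kappa0_nonneg (kappa1^[i] v)],
                    kappa0_le_one _⟩
            _ ≤ ∑ _s ∈ Finset.Ico r L, Real.sqrt |u - v| := by
                apply Finset.sum_le_sum
                intro s _
                have hsu := kappa1_iter_mem s hu hu'
                have hsv := kappa1_iter_mem s hv hv'
                calc |kappa0 (kappa1^[s] u) - kappa0 (kappa1^[s] v)|
                    ≤ Real.sqrt |kappa1^[s] u - kappa1^[s] v| :=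
                      kappa0_holder hsu.1 hsu.2 hsv.1 hsv.2
                  _ ≤ Real.sqrt |u - v| :=
                      Real.sqrt_le_sqrt (kappa1_iter_lip s hu hu' hv hv')
            _ = ((L - r : ℕ) : ℝ) * Real.sqrt |u - v| := by
                rw [Finset.sum_const, Nat.card_Ico, nsmul_eq_mul]
            _ ≤ (L:ℝ) * Real.sqrt |u - v| := by
                apply mul_le_mul_of_nonneg_right _ (Real.sqrt_nonneg _)
                exact_mod_cast Nat.cast_le.2 (Nat.sub_le L r)
        calc |kappa1^[r] u * ∏ s ∈ Finset.Ico r L, kappa0 (kappa1^[s] u)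
            - kappa1^[r] v * ∏ s ∈ Finset.Ico r L, kappa0 (kappa1^[s] v)|
            = |(kappa1^[r] u - kappa1^[r] v) * ∏ s ∈ Finset.Ico r L, kappa0 (kappa1^[s] u)
              + kappa1^[r] v * ((∏ s ∈ Finset.Ico r L, kappa0 (kappa1^[s] u))
                - ∏ s ∈ Finset.Ico r L, kappa0 (kappa1^[s] v))| := by ring_nf
          _ ≤ |kappa1^[r] u - kappa1^[r] v| * |∏ s ∈ Finset.Ico r L, kappa0 (kappa1^[s] u)|
              + |kappa1^[r] v| * |(∏ s ∈ Finset.Ico r L, kappa0 (kappa1^[s] u))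
                - ∏ s ∈ Finset.Ico r L, kappa0 (kappa1^[s] v)| := by
              rw [← abs_mul, ← abs_mul]
              exact abs_add_le _ _
          _ ≤ |u - v| * 1 + 1 * ((L:ℝ) * Real.sqrt |u - v|) := by
              apply add_le_add
              · exact mul_le_mul h1 hP1 (abs_nonneg _) (abs_nonneg _)
              · exact mul_le_mul hbv hPQ (abs_nonneg _) zero_le_one
          _ ≤ 2 * Real.sqrt |u - v| + (L:ℝ) * Real.sqrt |u - v| := by
              rw [mul_one, one_mul]
              exact add_le_add_left hsq _
          _ = ((L:ℝ)+2) * Real.sqrt |u - v| := by ring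
    _ = ((L:ℝ)+1) * (((L:ℝ)+2) * Real.sqrt |u - v|) := by
        rw [Finset.sum_const, Finset.card_range, nsmul_eq_mul]
        push_cast
        ring
    _ = ((L:ℝ)+1) * ((L:ℝ)+2) * Real.sqrt |u - v| := by ring



section barLemmas
variable {d : ℕ}

lemma one_le_N (x : EuclideanSpace ℝ (Fin d)) : 1 ≤ Real.sqrt (‖x‖^2 + 1) := by
  exact (Real.le_sqrt' one_pos).2 (by nlinarith [sq_nonneg ‖x‖])

lemma norm_le_N (x : EuclideanSpace ℝ (Fin d)) : ‖x‖ ≤ Real.sqrt (‖x‖^2 + 1) := by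
  exact (Real.le_sqrt (norm_nonneg x) (by positivity)).2 (by linarith)

lemma sqrt_sq_add_one_lip_aux {a b : ℝ} (hb : 0 ≤ b) (hba : b ≤ a) :
    Real.sqrt (a^2 + 1) - Real.sqrt (b^2 + 1) ≤ a - b := by
  have hbs : b ≤ Real.sqrt (b^2 + 1) := by
    exact (Real.le_sqrt hb (by positivity)).2 (by linarith)
  have hs0 : 0 ≤ Real.sqrt (b^2+1) := Real.sqrt_nonneg _
  have h : a^2 + 1 ≤ ((a - b) + Real.sqrt (b^2+1))^2 := by
    have h2 := Real.sq_sqrt (show (0:ℝ) ≤ b^2 + 1 by positivity)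
    nlinarith [hbs, hs0, sub_nonneg.2 hba]
  have := (Real.sqrt_le_left (by linarith)).2 h
  linarith

lemma N_lip (x z : EuclideanSpace ℝ (Fin d)) :
    |Real.sqrt (‖x‖^2 + 1) - Real.sqrt (‖z‖^2 + 1)| ≤ ‖x - z‖ := by
  have h := abs_norm_sub_norm_le x z
  rcases le_total ‖z‖ ‖x‖ with hc | hc
  · have := sqrt_sq_add_one_lip_aux (norm_nonneg z) hc
    rw [abs_of_nonneg (by linarith [Real.sqrt_le_sqrt (show ‖z‖^2+1 ≤ ‖x‖^2+1 by nlinarith [hc, norm_nonneg z])])]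
    have h2 : ‖x‖ - ‖z‖ ≤ ‖x - z‖ := by
      rw [abs_le] at h; exact h.2
    linarith
  · have := sqrt_sq_add_one_lip_aux (norm_nonneg x) hc
    rw [abs_of_nonpos (by linarith [Real.sqrt_le_sqrt (show ‖x‖^2+1 ≤ ‖z‖^2+1 by nlinarith [hc, norm_nonneg x])])]
    have h2 : ‖z‖ - ‖x‖ ≤ ‖x - z‖ := by
      rw [abs_le] at h
      calc ‖z‖ - ‖x‖ ≤ ‖z - x‖ := by linarith [abs_norm_sub_norm_le z x, (abs_le.1 (abs_norm_sub_norm_le z x)).2]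
      _ = ‖x - z‖ := norm_sub_rev z x
    linarith

lemma inner_add_one_le (x y : EuclideanSpace ℝ (Fin d)) :
    |(inner ℝ x y : ℝ) + 1| ≤ Real.sqrt (‖x‖^2 + 1) * Real.sqrt (‖y‖^2 + 1) := by
  have hcs : |(inner ℝ x y : ℝ)| ≤ ‖x‖ * ‖y‖ := abs_real_inner_le_norm x y
  have hsq : ((inner ℝ x y : ℝ) + 1)^2 ≤ (‖x‖^2+1) * (‖y‖^2+1) := by
    have h2 : ((inner ℝ x y : ℝ))^2 ≤ (‖x‖*‖y‖)^2 := by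
      rw [← sq_abs]
      exact pow_le_pow_left₀ (abs_nonneg _) hcs 2
    nlinarith [le_abs_self ((inner ℝ x y : ℝ)), sq_nonneg (‖x‖ - ‖y‖), mul_nonneg (norm_nonneg x) (norm_nonneg y)]
  calc |(inner ℝ x y : ℝ) + 1| = Real.sqrt (((inner ℝ x y : ℝ) + 1)^2) := (Real.sqrt_sq_eq_abs _).symm
  _ ≤ Real.sqrt ((‖x‖^2+1) * (‖y‖^2+1)) := Real.sqrt_le_sqrt hsq
  _ = _ := Real.sqrt_mul (by positivity) _

lemma ntkBar_mem (x y : EuclideanSpace ℝ (Fin d)) : -1 ≤ ntkBar x y ∧ ntkBar x y ≤ 1 := by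
  have hpos : (0:ℝ) < Real.sqrt (‖x‖^2 + 1) * Real.sqrt (‖y‖^2 + 1) := by
    have := one_le_N x; have := one_le_N y; nlinarith
  have h : |ntkBar x y| ≤ 1 := by
    unfold ntkBar
    rw [abs_div, abs_of_pos hpos, div_le_one hpos]
    exact inner_add_one_le x y
  exact ⟨(abs_le.1 h).1, (abs_le.1 h).2⟩

lemma ntkBar_comm (x y : EuclideanSpace ℝ (Fin d)) : ntkBar x y = ntkBar y x := by
  unfold ntkBar
  rw [real_inner_comm, mul_comm]

lemma ntkBar_lip_left (x z w : EuclideanSpace ℝ (Fin d)) :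
    |ntkBar x w - ntkBar z w| ≤ 2 * ‖x - z‖ := by
  set Nx := Real.sqrt (‖x‖^2 + 1) with hNx
  set Nz := Real.sqrt (‖z‖^2 + 1) with hNz
  set Nw := Real.sqrt (‖w‖^2 + 1) with hNw
  have hNx1 : 1 ≤ Nx := one_le_N x
  have hNz1 : 1 ≤ Nz := one_le_N z
  have hNw1 : 1 ≤ Nw := one_le_N w
  have hNxp : 0 < Nx := by linarith
  have hNzp : 0 < Nz := by linarith
  have hNwp : 0 < Nw := by linarith
  set Px : ℝ := (inner ℝ x w : ℝ) + 1 with hPx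
  set Pz : ℝ := (inner ℝ z w : ℝ) + 1 with hPz
  have heq : ntkBar x w - ntkBar z w = (Px * Nz - Pz * Nx) / (Nx * Nz * Nw) := by
    unfold ntkBar
    rw [← hNx, ← hNz, ← hNw, ← hPx, ← hPz]
    field_simp
  have hPdiff : |Px - Pz| ≤ ‖x - z‖ * Nw := by
    have h1 : Px - Pz = (inner ℝ (x - z) w : ℝ) := by
      rw [hPx, hPz, inner_sub_left]; ring
    rw [h1]
    calc |(inner ℝ (x - z) w : ℝ)| ≤ ‖x - z‖ * ‖w‖ := abs_real_inner_le_norm _ _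
    _ ≤ ‖x - z‖ * Nw := mul_le_mul_of_nonneg_left (norm_le_N w) (norm_nonneg _)
  have hPzb : |Pz| ≤ Nz * Nw := inner_add_one_le z w
  have hNdiff : |Nx - Nz| ≤ ‖x - z‖ := N_lip x z
  have hnum : |Px * Nz - Pz * Nx| ≤ 2 * ‖x - z‖ * (Nz * Nw) := by
    have key : Px * Nz - Pz * Nx = (Px - Pz) * Nz + Pz * (Nz - Nx) := by ring
    rw [key]
    calc |(Px - Pz) * Nz + Pz * (Nz - Nx)| ≤ |(Px - Pz) * Nz| + |Pz * (Nz - Nx)| := abs_add_le _ _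
    _ = |Px - Pz| * |Nz| + |Pz| * |Nz - Nx| := by rw [abs_mul, abs_mul]
    _ ≤ (‖x - z‖ * Nw) * Nz + (Nz * Nw) * ‖x - z‖ := by
        apply add_le_add
        · rw [abs_of_pos hNzp]
          exact mul_le_mul_of_nonneg_right hPdiff hNzp.le
        · rw [abs_sub_comm] at hNdiff
          exact mul_le_mul hPzb hNdiff (abs_nonneg _) (by positivity)
    _ = 2 * ‖x - z‖ * (Nz * Nw) := by ring
  have hden : (0:ℝ) < Nx * Nz * Nw := mul_pos (mul_pos hNxp hNzp) hNwp
  rw [heq, abs_div, abs_of_pos hden, div_le_iff₀ hden]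
  calc |Px * Nz - Pz * Nx| ≤ 2 * ‖x - z‖ * (Nz * Nw) := hnum
  _ ≤ 2 * ‖x - z‖ * (Nx * Nz * Nw) := by
      apply mul_le_mul_of_nonneg_left _ (by positivity)
      nlinarith [mul_pos hNzp hNwp, hNx1]

end barLemmas

lemma sum_bound (L : ℕ) {w : ℝ} (h1 : -1 ≤ w) (h2 : w ≤ 1) :
    |∑ r ∈ Finset.range (L+1), kappa1^[r] w * ∏ s ∈ Finset.Ico r L, kappa0 (kappa1^[s] w)|
      ≤ (L:ℝ) + 1 := by
  calc |∑ r ∈ Finset.range (L+1), kappa1^[r] w * ∏ s ∈ Finset.Ico r L, kappa0 (kappa1^[s] w)|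
      ≤ ∑ r ∈ Finset.range (L+1),
          |kappa1^[r] w * ∏ s ∈ Finset.Ico r L, kappa0 (kappa1^[s] w)| :=
        Finset.abs_sum_le_sum_abs _ _
    _ ≤ ∑ _r ∈ Finset.range (L+1), (1:ℝ) := by
        apply Finset.sum_le_sum
        intro r _
        rw [abs_mul]
        have hm := kappa1_iter_mem r h1 h2
        have hP : |∏ s ∈ Finset.Ico r L, kappa0 (kappa1^[s] w)| ≤ 1 := by
          rw [Finset.abs_prod]
          exact Finset.prod_le_one (fun i _ => abs_nonneg _)
            (fun i _ => abs_le.2 ⟨by linarith [kappa0_nonneg (kappa1^[i] w)], kappa0_le_one _⟩)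
        calc |kappa1^[r] w| * |∏ s ∈ Finset.Ico r L, kappa0 (kappa1^[s] w)|
            ≤ 1 * 1 := mul_le_mul (abs_le.2 ⟨hm.1, hm.2⟩) hP (abs_nonneg _) zero_le_one
          _ = 1 := mul_one 1
    _ = (L:ℝ) + 1 := by
        rw [Finset.sum_const, Finset.card_range, nsmul_eq_mul]
        push_cast; ring

set_option maxHeartbeats 1000000 in
/-- **Hölder continuity of the NTK.** For fixed `L ≥ 2` and `d ≥ 1` there is a
constant `C > 0` such that for all `R ≥ 1` and points with `‖(x,1)‖ ≤ R` etc.,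
`|K^NT(x,x′) − K^NT(z,z′)| ≤ C R² ‖(x,x′) − (z,z′)‖^{2^{-L}}`. -/
theorem NTK_holder (d L : ℕ) (hL : 2 ≤ L) (hd : 1 ≤ d) :
    ∃ C > (0:ℝ), ∀ R : ℝ, 1 ≤ R →
      ∀ x x' z z' : EuclideanSpace ℝ (Fin d),
        Real.sqrt (‖x‖ ^ 2 + 1) ≤ R → Real.sqrt (‖x'‖ ^ 2 + 1) ≤ R →
        Real.sqrt (‖z‖ ^ 2 + 1) ≤ R → Real.sqrt (‖z'‖ ^ 2 + 1) ≤ R →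
        |NTK L x x' - NTK L z z'|
          ≤ C * R ^ 2 *
            Real.sqrt (‖x - z‖ ^ 2 + ‖x' - z'‖ ^ 2) ^ (((1:ℝ) / 2) ^ L) := by
  refine ⟨2*((L:ℝ)+1)*((L:ℝ)+3), by positivity, ?_⟩
  intro R hR x x' z z' hx hx' hz hz'
  set δ := Real.sqrt (‖x - z‖ ^ 2 + ‖x' - z'‖ ^ 2) with hδdef
  set e := ((1:ℝ)/2)^L with hedef
  set u := ntkBar x x' with hu
  set v := ntkBar z z' with hv
  set Su := ∑ r ∈ Finset.range (L+1), kappa1^[r] u * ∏ s ∈ Finset.Ico r L, kappa0 (kappa1^[s] u)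
    with hSu
  set Sv := ∑ r ∈ Finset.range (L+1), kappa1^[r] v * ∏ s ∈ Finset.Ico r L, kappa0 (kappa1^[s] v)
    with hSv
  set Nx := Real.sqrt (‖x‖ ^ 2 + 1) with hNx
  set Nx' := Real.sqrt (‖x'‖ ^ 2 + 1) with hNx'
  set Nz := Real.sqrt (‖z‖ ^ 2 + 1) with hNz
  set Nz' := Real.sqrt (‖z'‖ ^ 2 + 1) with hNz'
  have hNTKx : NTK L x x' = Nx * Nx' * Su + 1 := by
    rw [hSu, hu, hNx, hNx']; rfl
  have hNTKz : NTK L z z' = Nz * Nz' * Sv + 1 := by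
    rw [hSv, hv, hNz, hNz']; rfl
  clear_value δ e u v Su Sv Nx Nx' Nz Nz'
  obtain ⟨Kx, hKx⟩ : ∃ t, NTK L x x' = t := ⟨_, rfl⟩
  obtain ⟨Kz, hKz⟩ : ∃ t, NTK L z z' = t := ⟨_, rfl⟩
  rw [hKx] at hNTKx
  rw [hKz] at hNTKz
  rw [hKx, hKz]
  have hδ0 : 0 ≤ δ := by rw [hδdef]; exact Real.sqrt_nonneg _
  have he0 : (0:ℝ) < e := by rw [hedef]; positivity
  have he2 : e ≤ 1/2 := by
    rw [hedef]
    calc ((1:ℝ)/2)^L ≤ ((1:ℝ)/2)^1 :=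
          pow_le_pow_of_le_one (by norm_num) (by norm_num) (by omega)
    _ = 1/2 := pow_one _
  have hxz : ‖x - z‖ ≤ δ := by
    rw [hδdef]
    exact (Real.le_sqrt (norm_nonneg _) (by positivity)).2 (by nlinarith [sq_nonneg ‖x' - z'‖])
  have hx'z' : ‖x' - z'‖ ≤ δ := by
    rw [hδdef]
    exact (Real.le_sqrt (norm_nonneg _) (by positivity)).2 (by nlinarith [sq_nonneg ‖x - z‖])
  have hu1 : -1 ≤ u := by rw [hu]; exact (ntkBar_mem x x').1
  have hu2 : u ≤ 1 := by rw [hu]; exact (ntkBar_mem x x').2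
  have hv1 : -1 ≤ v := by rw [hv]; exact (ntkBar_mem z z').1
  have hv2 : v ≤ 1 := by rw [hv]; exact (ntkBar_mem z z').2
  have huv : |u - v| ≤ 4 * δ := by
    rw [hu, hv]
    calc |ntkBar x x' - ntkBar z z'|
        ≤ |ntkBar x x' - ntkBar z x'| + |ntkBar z x' - ntkBar z z'| := abs_sub_le _ _ _
    _ ≤ 2 * ‖x - z‖ + 2 * ‖x' - z'‖ := by
          apply add_le_add (ntkBar_lip_left x z x')
          rw [ntkBar_comm z x', ntkBar_comm z z']
          exact ntkBar_lip_left x' z' z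
    _ ≤ 4 * δ := by linarith
  have hNx1 : 1 ≤ Nx := by rw [hNx]; exact one_le_N x
  have hNx'1 : 1 ≤ Nx' := by rw [hNx']; exact one_le_N x'
  have hNz1 : 1 ≤ Nz := by rw [hNz]; exact one_le_N z
  have hNz'1 : 1 ≤ Nz' := by rw [hNz']; exact one_le_N z'
  have hSub : |Su| ≤ (L:ℝ) + 1 := by rw [hSu]; exact sum_bound L hu1 hu2
  have hSvb : |Sv| ≤ (L:ℝ) + 1 := by rw [hSv]; exact sum_bound L hv1 hv2
  have hSdiff : |Su - Sv| ≤ ((L:ℝ)+1) * ((L:ℝ)+2) * Real.sqrt |u - v| := by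
    rw [hSu, hSv]; exact sum_holder L hu1 hu2 hv1 hv2
  have hNxz : |Nx - Nz| ≤ ‖x - z‖ := by rw [hNx, hNz]; exact N_lip x z
  have hNx'z' : |Nx' - Nz'| ≤ ‖x' - z'‖ := by rw [hNx', hNz']; exact N_lip x' z'
  have hNx'a : |Nx'| ≤ R := by rw [abs_of_nonneg (by linarith)]; exact hx'
  have hNza : |Nz| ≤ R := by rw [abs_of_nonneg (by linarith)]; exact hz
  have hAdiff : |Nx * Nx' - Nz * Nz'| ≤ 2 * R * δ := by
    have key : Nx * Nx' - Nz * Nz' = (Nx - Nz) * Nx' + Nz * (Nx' - Nz') := by ring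
    rw [key]
    calc |(Nx - Nz) * Nx' + Nz * (Nx' - Nz')|
        ≤ |Nx - Nz| * |Nx'| + |Nz| * |Nx' - Nz'| := by
          rw [← abs_mul, ← abs_mul]; exact abs_add_le _ _
    _ ≤ δ * R + R * δ := by
          apply add_le_add
          · exact mul_le_mul (hNxz.trans hxz) hNx'a (abs_nonneg _) (by linarith)
          · exact mul_le_mul hNza (hNx'z'.trans hx'z') (abs_nonneg _) (by linarith)
    _ = 2 * R * δ := by ring
  have hkey : Kx - Kz = (Nx * Nx' - Nz * Nz') * Su + Nz * Nz' * (Su - Sv) := by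
    rw [hNTKx, hNTKz]; ring
  have hmain : |Kx - Kz|
      ≤ 2 * R * δ * ((L:ℝ)+1) + R^2 * (((L:ℝ)+1) * ((L:ℝ)+2) * Real.sqrt |u - v|) := by
    rw [hkey]
    calc |(Nx * Nx' - Nz * Nz') * Su + Nz * Nz' * (Su - Sv)|
        ≤ |Nx * Nx' - Nz * Nz'| * |Su| + |Nz * Nz'| * |Su - Sv| := by
          rw [← abs_mul, ← abs_mul]; exact abs_add_le _ _
    _ ≤ (2 * R * δ) * ((L:ℝ)+1) + R^2 * (((L:ℝ)+1) * ((L:ℝ)+2) * Real.sqrt |u - v|) := by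
          apply add_le_add
          · exact mul_le_mul hAdiff hSub (abs_nonneg _) (by positivity)
          · apply mul_le_mul _ hSdiff (abs_nonneg _) (by positivity)
            rw [abs_of_pos (mul_pos (by linarith) (by linarith))]
            exact (mul_le_mul hz hz' (by linarith) (by linarith)).trans_eq (pow_two R).symm
  by_cases hδz : δ = 0
  · rw [hδdef] at hδz
    have hsum : ‖x - z‖^2 + ‖x' - z'‖^2 ≤ 0 := Real.sqrt_eq_zero'.1 hδz
    have h1 : x = z := by
      have h' : ‖x - z‖^2 = 0 :=
        le_antisymm (by linarith [sq_nonneg ‖x' - z'‖]) (sq_nonneg _)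
      have : ‖x - z‖ = 0 := by
        have := pow_eq_zero_iff (n := 2) (by norm_num) |>.1 h'
        exact this
      rwa [norm_sub_eq_zero_iff] at this
    have h2 : x' = z' := by
      have h' : ‖x' - z'‖^2 = 0 :=
        le_antisymm (by linarith [sq_nonneg ‖x - z‖]) (sq_nonneg _)
      have : ‖x' - z'‖ = 0 := by
        have := pow_eq_zero_iff (n := 2) (by norm_num) |>.1 h'
        exact this
      rwa [norm_sub_eq_zero_iff] at this
    have hδz' : δ = 0 := by rw [hδdef]; exact hδz
    subst h1; subst h2
    have hKK : Kx = Kz := hKx.symm.trans hKz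
    rw [hδz', Real.zero_rpow he0.ne', hKK]
    simp
  · have hδpos : 0 < δ := lt_of_le_of_ne hδ0 (Ne.symm hδz)
    by_cases hδ1 : δ ≤ 1
    · have hsqe : Real.sqrt δ ≤ δ ^ e := by
        rw [Real.sqrt_eq_rpow]
        exact Real.rpow_le_rpow_of_exponent_ge hδpos hδ1 he2
      have hs1 : Real.sqrt δ ≤ 1 := by
        rw [show (1:ℝ) = Real.sqrt 1 from (Real.sqrt_one).symm]
        exact Real.sqrt_le_sqrt hδ1
      have hδe : δ ≤ δ ^ e := by
        have hms := Real.mul_self_sqrt hδ0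
        have : δ ≤ Real.sqrt δ := by
          calc δ = Real.sqrt δ * Real.sqrt δ := hms.symm
          _ ≤ Real.sqrt δ * 1 := mul_le_mul_of_nonneg_left hs1 (Real.sqrt_nonneg δ)
          _ = Real.sqrt δ := mul_one _
        exact this.trans hsqe
      have h4 : Real.sqrt |u - v| ≤ 2 * Real.sqrt δ := by
        calc Real.sqrt |u - v| ≤ Real.sqrt (4 * δ) := Real.sqrt_le_sqrt huv
        _ = 2 * Real.sqrt δ := by
            rw [show (4:ℝ) * δ = 2^2 * δ by norm_num, Real.sqrt_mul (by positivity),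
              Real.sqrt_sq (by norm_num)]
      have h5 : Real.sqrt |u - v| ≤ 2 * δ ^ e := by linarith
      have hRR : R ≤ R^2 := by
        calc R = R * 1 := (mul_one R).symm
        _ ≤ R * R := mul_le_mul_of_nonneg_left hR (by linarith)
        _ = R^2 := (pow_two R).symm
      have hre0 : (0:ℝ) ≤ δ ^ e := Real.rpow_nonneg hδ0 e
      have p1 : R * δ ≤ R^2 * δ ^ e := mul_le_mul hRR hδe hδ0 (by positivity)
      have p2 : R^2 * (((L:ℝ)+1) * ((L:ℝ)+2) * Real.sqrt |u - v|)
          ≤ R^2 * (((L:ℝ)+1) * ((L:ℝ)+2) * (2 * δ ^ e)) := by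
        apply mul_le_mul_of_nonneg_left _ (by positivity)
        apply mul_le_mul_of_nonneg_left h5 (by positivity)
      calc |Kx - Kz|
          ≤ 2 * R * δ * ((L:ℝ)+1) + R^2 * (((L:ℝ)+1) * ((L:ℝ)+2) * Real.sqrt |u - v|) := hmain
      _ ≤ 2 * (R^2 * δ ^ e) * ((L:ℝ)+1) + R^2 * (((L:ℝ)+1) * ((L:ℝ)+2) * (2 * δ ^ e)) := by
          apply add_le_add _ p2
          calc 2 * R * δ * ((L:ℝ)+1) = 2 * ((L:ℝ)+1) * (R * δ) := by ring
          _ ≤ 2 * ((L:ℝ)+1) * (R^2 * δ ^ e) := mul_le_mul_of_nonneg_left p1 (by positivity)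
          _ = 2 * (R^2 * δ ^ e) * ((L:ℝ)+1) := by ring
      _ = 2*((L:ℝ)+1)*((L:ℝ)+3) * R^2 * δ ^ e := by ring
    · have hδ1' : 1 ≤ δ := le_of_not_ge hδ1
      have hde1 : 1 ≤ δ ^ e := Real.one_le_rpow hδ1' he0.le
      have hNTKxb : |Kx| ≤ R^2 * ((L:ℝ)+1) + 1 := by
        rw [hNTKx]
        calc |Nx * Nx' * Su + 1| ≤ |Nx * Nx' * Su| + 1 := by
              have := abs_add_le (Nx * Nx' * Su) 1
              simpa using this
        _ ≤ R^2 * ((L:ℝ)+1) + 1 := by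
            rw [abs_mul]
            have h1 : |Nx * Nx'| ≤ R^2 := by
              rw [abs_of_pos (mul_pos (by linarith) (by linarith))]
              exact (mul_le_mul hx hx' (by linarith) (by linarith)).trans_eq (pow_two R).symm
            linarith [mul_le_mul h1 hSub (abs_nonneg Su) (by positivity : (0:ℝ) ≤ R^2)]
      have hNTKzb : |Kz| ≤ R^2 * ((L:ℝ)+1) + 1 := by
        rw [hNTKz]
        calc |Nz * Nz' * Sv + 1| ≤ |Nz * Nz' * Sv| + 1 := by
              have := abs_add_le (Nz * Nz' * Sv) 1
              simpa using this
        _ ≤ R^2 * ((L:ℝ)+1) + 1 := by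
            rw [abs_mul]
            have h1 : |Nz * Nz'| ≤ R^2 := by
              rw [abs_of_pos (mul_pos (by linarith) (by linarith))]
              exact (mul_le_mul hz hz' (by linarith) (by linarith)).trans_eq (pow_two R).symm
            linarith [mul_le_mul h1 hSvb (abs_nonneg Sv) (by positivity : (0:ℝ) ≤ R^2)]
      have htri : |Kx - Kz| ≤ 2 * (R^2 * ((L:ℝ)+1) + 1) := by
        calc |Kx - Kz| ≤ |Kx| + |Kz| := abs_sub _ _
        _ ≤ 2 * (R^2 * ((L:ℝ)+1) + 1) := by linarith
      have hR2 : (1:ℝ) ≤ R^2 := by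
        calc (1:ℝ) = 1 * 1 := by ring
        _ ≤ R * R := mul_le_mul hR hR zero_le_one (by linarith)
        _ = R^2 := (pow_two R).symm
      calc |Kx - Kz| ≤ 2 * (R^2 * ((L:ℝ)+1) + 1) := htri
      _ ≤ 2*((L:ℝ)+1)*((L:ℝ)+3) * R^2 * 1 := by
          have hL0 : (0:ℝ) ≤ (L:ℝ) := Nat.cast_nonneg L
          have hL2 : (2:ℝ) ≤ ((L:ℝ)+1)*((L:ℝ)+2) := by
            linarith [hL0, sq_nonneg ((L:ℝ))]
          have h2 : ((L:ℝ)+1)*((L:ℝ)+2) ≤ ((L:ℝ)+1)*((L:ℝ)+2)*R^2 := by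
            nth_rewrite 1 [← mul_one (((L:ℝ)+1)*((L:ℝ)+2))]
            exact mul_le_mul_of_nonneg_left hR2 (by positivity)
          linarith [hL2.trans h2]
      _ ≤ 2*((L:ℝ)+1)*((L:ℝ)+3) * R^2 * δ ^ e := by
          apply mul_le_mul_of_nonneg_left hde1 (by positivity)

end
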